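/- Let L be a finite-dimensional anticommutative algebra over a field F of characteristic zero and let r = Σᵢ aᵢ⊗bᵢ ∈ L⊗L be a solution of the classical Yang–Baxter equation. Equip L* with the multiplication (fg)(c) = Σᵢ f(aᵢc)g(bᵢ) − f(aᵢ)g(cbᵢ) (the dual algebra product associated with the comultiplication Δ_r(a) = Σᵢ aᵢa⊗bᵢ − aᵢ⊗abᵢ). Then the linear map φ₁ : L* → L defined by φ₁(f) = −Σᵢ f(aᵢ)·bᵢ is an algebra homomorphism, i.e. φ₁(fg) = φ₁(f)·φ₁(g) for all f, g ∈ L*. -/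
import Mathlib


open TensorProduct

/-- The classical Yang–Baxter equation for `r = ∑ i, a i ⊗ b i`. -/
def CYBE {F L : Type*} [Field F] [AddCommGroup L] [Module F L]
    (mul : L →ₗ[F] L →ₗ[F] L) {n : ℕ} (a b : Fin n → L) : Prop :=
  ∑ i : Fin n, ∑ j : Fin n,
      (mul (a i) (a j) ⊗ₜ[F] (b i ⊗ₜ[F] b j)
        - a i ⊗ₜ[F] (mul (a j) (b i) ⊗ₜ[F] b j)
        + a i ⊗ₜ[F] (a j ⊗ₜ[F] mul (b i) (b j))) = 0

theorem stmt17 {F L : Type*} [Field F] [CharZero F] [AddCommGroup L] [Module F L]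
    [FiniteDimensional F L] (mul : L →ₗ[F] L →ₗ[F] L)
    -- `L` is anticommutative
    (hanti : ∀ v : L, mul v v = 0)
    -- `r = ∑ i, a i ⊗ b i` is a solution of the CYBE
    {n : ℕ} (a b : Fin n → L) (hcybe : CYBE mul a b) :
    -- `φ₁(f) = -∑ i, f(aᵢ) • bᵢ` is a homomorphism from the dual algebra
    -- `(fg)(c) = ∑ i, f(aᵢc)g(bᵢ) - f(aᵢ)g(cbᵢ)` to `L`
    ∀ f g : Module.Dual F L,
      -∑ i, (∑ j, (f (mul (a j) (a i)) * g (b j) - f (a j) * g (mul (a i) (b j)))) • b i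
        = mul (-∑ i, f (a i) • b i) (-∑ j, g (a j) • b j) := by
  intro f g
  have h := congrArg (TensorProduct.lift (f.smulRight
    (TensorProduct.lift (g.smulRight LinearMap.id)))) hcybe
  simp only [map_sum, map_zero, map_add, map_sub, LinearMap.smul_apply, TensorProduct.lift.tmul,
    LinearMap.smulRight_apply, LinearMap.id_apply, smul_smul] at h
  have key : ∑ i : Fin n, ∑ j : Fin n,
      ((f (mul (a i) (a j)) * g (b i)) • b j - (f (a i) * g (mul (a j) (b i))) • b j)
      = - ∑ i : Fin n, ∑ j : Fin n, (f (a i) * g (a j)) • mul (b i) (b j) := by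
    rw [eq_neg_iff_add_eq_zero, ← h, ← Finset.sum_add_distrib]
    apply Finset.sum_congr rfl; intro i _
    rw [← Finset.sum_add_distrib]
  have L1 : -∑ i, (∑ j, (f (mul (a j) (a i)) * g (b j) - f (a j) * g (mul (a i) (b j)))) • b i
      = -∑ i : Fin n, ∑ j : Fin n,
          ((f (mul (a i) (a j)) * g (b i)) • b j - (f (a i) * g (mul (a j) (b i))) • b j) := by
    rw [Finset.sum_comm]
    congr 1
    apply Finset.sum_congr rfl; intro i _
    rw [Finset.sum_smul]
    exact Finset.sum_congr rfl fun x _ => sub_smul ..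
  rw [L1, key, neg_neg]
  rw [Finset.sum_comm]
  simp only [map_neg, map_sum, map_smul, LinearMap.neg_apply, LinearMap.sum_apply,
    LinearMap.smul_apply, neg_neg, Finset.smul_sum, smul_smul]
  simp only [smul_neg, neg_neg, Finset.sum_neg_distrib, Finset.smul_sum, smul_smul]
  exact Finset.sum_congr rfl fun i _ => Finset.sum_congr rfl fun j _ => by rw [mul_comm]
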